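/- Let S be a unital epsilon-strongly G-graded ring, {e_1, …, e_k} its set of epsilon-central elements, and e' = 1_S − Σ_{j=1}^k e_j. If e' ≠ 0, then e'S is epsilon-strongly G-graded with ε'_g = e' ε_g for each g ∈ G. -/
import Mathlib


open Pointwise

section Defs

variable {G : Type} [AddGroup G] [DecidableEq G]
variable {A : Type} [Ring A]
variable {M : Type} [AddCommGroup M] [Module A M]

/-- The additive subgroup of `M` consisting of finite sums of products `a • m`
with `a ∈ S` and `m ∈ N`. -/
def prodSMul (S : AddSubgroup A) (N : AddSubgroup M) : AddSubgroup M where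
  __ := S.toAddSubmonoid • N.toAddSubmonoid
  neg_mem' {x} hx := by
    refine AddSubmonoid.smul_induction_on hx (fun a ha m hm => ?_) (fun x y hx hy => ?_)
    · rw [show -(a • m) = (-a) • m by rw [neg_smul]]
      exact AddSubmonoid.smul_mem_smul (S.neg_mem ha) hm
    · rw [neg_add]
      exact (S.toAddSubmonoid • N.toAddSubmonoid).add_mem hx hy

/-- A (possibly non-unital) ring, here an additive subgroup of `A` closed under
multiplication, is *s-unital* if every element has a left and a right local unit in it. -/
def IsSUnitalSub (I : AddSubgroup A) : Prop :=
  ∀ a ∈ I, ∃ u ∈ I, ∃ v ∈ I, u * a = a ∧ a * v = a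

variable (𝒜 : G → AddSubgroup A)

/-- `S` is symmetrically graded if `S_g S_{g⁻¹} S_g = S_g` for all `g`. -/
def IsSymmetricallyGraded : Prop := ∀ g : G, 𝒜 g * 𝒜 (-g) * 𝒜 g = 𝒜 g

/-- `S` is nearly epsilon-strongly graded if each `S_g` is an s-unital
`(S_g S_{g⁻¹}, S_{g⁻¹} S_g)`-bimodule: for every `s ∈ S_g` there are
`u ∈ S_g S_{g⁻¹}` and `v ∈ S_{g⁻¹} S_g` with `u s = s = s v`. -/
def IsNearlyEpsilonStrong : Prop :=
  ∀ g : G, ∀ s ∈ 𝒜 g, ∃ u ∈ 𝒜 g * 𝒜 (-g), ∃ v ∈ 𝒜 (-g) * 𝒜 g, u * s = s ∧ s * v = s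


section EpsilonCentral

variable {G : Type} [AddGroup G] [DecidableEq G]
variable {A : Type} [Ring A]

/-- `r` is an epsilon-central element for the family `ε`: a minimal nonzero element of
the boolean semigroup generated by `{ε_g : g ∈ G}` that is central in `S`. -/
def IsEpsilonCentral (ε : G → A) (r : A) : Prop :=
  r ∈ Subsemigroup.closure (Set.range ε) ∧ r ≠ 0 ∧
    (∀ a ∈ Subsemigroup.closure (Set.range ε), a ≠ 0 → a * r = a → a = r) ∧
    ∀ x : A, r * x = x * r

/-- The image `e S_g` of a homogeneous component under left multiplication by `e`. -/
def cornerComponent (e : A) (S : AddSubgroup A) : AddSubgroup A :=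
  S.map (AddMonoidHom.mulLeft e)

end EpsilonCentral

section AuxLemmas

open Pointwise

variable {G : Type} [AddGroup G] [DecidableEq G]
variable {A : Type} [Ring A]

theorem aux_mul_mem_mul' {S T : AddSubgroup A} {a b : A} (ha : a ∈ S) (hb : b ∈ T) :
    a * b ∈ S * T := AddSubmonoid.mul_mem_mul ha hb

variable (𝒜 : G → AddSubgroup A) [GradedRing 𝒜] (ε : G → A)
    (hmem : ∀ g : G, ε g ∈ 𝒜 g * 𝒜 (-g))
    (hunit : ∀ g : G, ∀ s ∈ 𝒜 g, ε g * s = s ∧ s * ε (-g) = s)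

include hunit in
/-- `ε g` is a two-sided identity on `𝒜 g * 𝒜 (-g)`. -/
theorem aux_eps_unit : ∀ g : G, ∀ x ∈ 𝒜 g * 𝒜 (-g), ε g * x = x ∧ x * ε g = x := by
  intro g x hx
  refine AddSubmonoid.mul_induction_on hx (fun a ha b hb => ?_) (fun x y hx hy => ?_)
  · have h1 := (hunit g a ha).1
    have h2 : b * ε g = b := by
      have := (hunit (-g) b hb).2
      rwa [neg_neg] at this
    constructor
    · rw [← mul_assoc, h1]
    · rw [mul_assoc, h2]
  · exact ⟨by rw [mul_add, hx.1, hy.1], by rw [add_mul, hx.2, hy.2]⟩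

/-- `𝒜 g * 𝒜 (-g) ⊆ 𝒜 0`. -/
theorem aux_mul_sub_zero : ∀ g : G, ∀ x ∈ 𝒜 g * 𝒜 (-g), x ∈ 𝒜 0 := by
  intro g x hx
  refine AddSubmonoid.mul_induction_on hx (fun a ha b hb => ?_) (fun x y hx hy => ?_)
  · have ha' : a ∈ 𝒜 g := ha
    have hb' : b ∈ 𝒜 (-g) := hb
    have := SetLike.mul_mem_graded (A := 𝒜) ha' hb'
    rwa [add_neg_cancel] at this
  · exact add_mem hx hy

include hmem in
/-- `𝒜 g * 𝒜 (-g)` absorbs multiplication by `𝒜 0` elements of `ε g`. -/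
theorem aux_eps_mul_mem : ∀ g : G, ∀ s ∈ 𝒜 0,
    ε g * s ∈ 𝒜 g * 𝒜 (-g) ∧ s * ε g ∈ 𝒜 g * 𝒜 (-g) := by
  intro g s hs
  have hx := hmem g
  constructor
  · refine AddSubmonoid.mul_induction_on hx (fun a ha b hb => ?_) (fun x y hx hy => ?_)
    · have hb' : b ∈ 𝒜 (-g) := hb
      have ha' : a ∈ 𝒜 g := ha
      have hbs : b * s ∈ 𝒜 (-g) := by
        have := SetLike.mul_mem_graded (A := 𝒜) hb' hs
        rwa [add_zero] at this
      rw [mul_assoc]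
      exact aux_mul_mem_mul' ha' hbs
    · rw [add_mul]; exact add_mem hx hy
  · refine AddSubmonoid.mul_induction_on hx (fun a ha b hb => ?_) (fun x y hx hy => ?_)
    · have ha' : a ∈ 𝒜 g := ha
      have hb' : b ∈ 𝒜 (-g) := hb
      have hsa : s * a ∈ 𝒜 g := by
        have := SetLike.mul_mem_graded (A := 𝒜) hs ha'
        rwa [zero_add] at this
      rw [← mul_assoc]
      exact aux_mul_mem_mul' hsa hb'
    · rw [mul_add]; exact add_mem hx hy

include hmem hunit in
/-- `ε g` is central in `𝒜 0`. -/
theorem aux_eps_central : ∀ g : G, ∀ s ∈ 𝒜 0, ε g * s = s * ε g := by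
  intro g s hs
  obtain ⟨h1, h2⟩ := aux_eps_mul_mem 𝒜 ε hmem g s hs
  have e1 : ε g * s * ε g = ε g * s := (aux_eps_unit 𝒜 ε hunit g _ h1).2
  have e2 : ε g * (s * ε g) = s * ε g := (aux_eps_unit 𝒜 ε hunit g _ h2).1
  rw [← e1, mul_assoc, e2]

include hmem in
theorem aux_closure_sub_zero : ∀ x ∈ Subsemigroup.closure (Set.range ε), x ∈ 𝒜 0 := by
  intro x hx
  induction hx using Subsemigroup.closure_induction with
  | mem z hz =>
    obtain ⟨g, rfl⟩ := hz
    exact aux_mul_sub_zero 𝒜 g _ (hmem g)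
  | mul x y _ _ hx hy =>
    have := SetLike.mul_mem_graded (A := 𝒜) hx hy
    rwa [add_zero] at this

include hmem hunit in
theorem aux_closure_comm : ∀ x ∈ Subsemigroup.closure (Set.range ε),
    ∀ y ∈ Subsemigroup.closure (Set.range ε), x * y = y * x := by
  intro x hx y hy
  induction hx using Subsemigroup.closure_induction with
  | mem z hz =>
    obtain ⟨g, rfl⟩ := hz
    exact aux_eps_central 𝒜 ε hmem hunit g y (aux_closure_sub_zero 𝒜 ε hmem y hy)
  | mul a b ha hb iha ihb =>
    rw [mul_assoc, ihb, ← mul_assoc, iha, mul_assoc]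

include hmem hunit in
theorem aux_closure_idem : ∀ x ∈ Subsemigroup.closure (Set.range ε), x * x = x := by
  intro x hx
  induction hx using Subsemigroup.closure_induction with
  | mem z hz =>
    obtain ⟨g, rfl⟩ := hz
    exact (aux_eps_unit 𝒜 ε hunit g _ (hmem g)).1
  | mul a b ha hb iha ihb =>
    have hcomm := aux_closure_comm 𝒜 ε hmem hunit a ha b hb
    calc a * b * (a * b) = a * (b * a) * b := by rw [mul_assoc, mul_assoc, mul_assoc]
    _ = a * a * (b * b) := by rw [← hcomm, ← mul_assoc, mul_assoc]
    _ = a * b := by rw [iha, ihb]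

include hmem hunit in
/-- Distinct epsilon-central elements are orthogonal. -/
theorem aux_orthogonal {e f : A} (he : IsEpsilonCentral ε e) (hf : IsEpsilonCentral ε f)
    (hne : e ≠ f) : e * f = 0 := by
  by_contra h0
  obtain ⟨hec, _, hemin, _⟩ := he
  obtain ⟨hfc, _, hfmin, _⟩ := hf
  have hefc : (e * f) ∈ Subsemigroup.closure (Set.range ε) := mul_mem hec hfc
  have hcomm := aux_closure_comm 𝒜 ε hmem hunit e hec f hfc
  have h1 : e * f * e = e * f := by
    rw [mul_assoc, ← hcomm, ← mul_assoc, aux_closure_idem 𝒜 ε hmem hunit e hec]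
  have h2 : e * f * f = e * f := by
    rw [mul_assoc, aux_closure_idem 𝒜 ε hmem hunit f hfc]
  have he1 := hemin _ hefc h0 h1
  have hf1 := hfmin _ hefc h0 h2
  exact hne (he1 ▸ hf1)

end AuxLemmas

/-- If `{e_1, …, e_k}` is the set of epsilon-central elements and
`e' = 1 - Σ e_j ≠ 0`, then `e'S` is epsilon-strongly `G`-graded with
`ε'_g = e' ε_g`. -/
theorem corner_epsilonStrong_of_complement
    {G : Type} [AddGroup G] [DecidableEq G]
    {A : Type} [Ring A] (𝒜 : G → AddSubgroup A) [GradedRing 𝒜]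
    (ε : G → A)
    (hmem : ∀ g : G, ε g ∈ 𝒜 g * 𝒜 (-g))
    (hunit : ∀ g : G, ∀ s ∈ 𝒜 g, ε g * s = s ∧ s * ε (-g) = s)
    (E : Finset A) (hE : ∀ x : A, x ∈ E ↔ IsEpsilonCentral ε x)
    (he' : (1 : A) - ∑ x ∈ E, x ≠ 0) :
    ∀ g : G,
      ((1 - ∑ x ∈ E, x) * ε g
          ∈ cornerComponent (1 - ∑ x ∈ E, x) (𝒜 g)
            * cornerComponent (1 - ∑ x ∈ E, x) (𝒜 (-g))) ∧
      ∀ s ∈ 𝒜 g,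
        ((1 - ∑ x ∈ E, x) * ε g) * ((1 - ∑ x ∈ E, x) * s) = (1 - ∑ x ∈ E, x) * s ∧
        ((1 - ∑ x ∈ E, x) * s) * ((1 - ∑ x ∈ E, x) * ε (-g)) = (1 - ∑ x ∈ E, x) * s := by
  intro g
  set e' : A := 1 - ∑ x ∈ E, x with he'def
  -- centrality of `e'`
  have hcentral : ∀ y : A, e' * y = y * e' := by
    intro y
    rw [he'def, sub_mul, mul_sub, one_mul, mul_one, Finset.sum_mul, Finset.mul_sum]
    congr 1
    exact Finset.sum_congr rfl fun x hx => ((hE x).mp hx).2.2.2 y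
  -- the sum of epsilon-central elements is idempotent
  have hsum_sq : (∑ x ∈ E, x) * (∑ x ∈ E, x) = ∑ x ∈ E, x := by
    rw [Finset.sum_mul]
    refine Finset.sum_congr rfl fun x hx => ?_
    rw [Finset.mul_sum,
      Finset.sum_eq_single x
        (fun b hb hbx =>
          aux_orthogonal 𝒜 ε hmem hunit ((hE x).mp hx) ((hE b).mp hb) (Ne.symm hbx))
        (fun h => absurd hx h)]
    exact aux_closure_idem 𝒜 ε hmem hunit x ((hE x).mp hx).1
  -- `e'` is idempotent
  have hidem : e' * e' = e' := by
    have h1 : e' * e' =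
        1 - (∑ x ∈ E, x) - (∑ x ∈ E, x) + (∑ x ∈ E, x) * (∑ x ∈ E, x) := by
      rw [he'def]; noncomm_ring
    rw [h1, hsum_sq, he'def]; noncomm_ring
  have habsorb : ∀ y : A, e' * y * e' = e' * y := by
    intro y
    rw [mul_assoc, ← hcentral y, ← mul_assoc, hidem]
  refine ⟨?_, ?_⟩
  · -- membership in the corner components product
    have key : ∀ x ∈ 𝒜 g * 𝒜 (-g),
        e' * x ∈ cornerComponent e' (𝒜 g) * cornerComponent e' (𝒜 (-g)) := by
      intro x hx
      refine AddSubmonoid.mul_induction_on hx (fun a ha b hb => ?_) (fun x y hx hy => ?_)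
      · have hsplit : (e' * a) * (e' * b) = e' * (a * b) := by
          rw [mul_assoc, ← mul_assoc a e' b, ← hcentral a, ← mul_assoc e' (e' * a) b,
            ← mul_assoc e' e' a, hidem, mul_assoc]
        rw [← hsplit]
        exact aux_mul_mem_mul' ⟨a, ha, rfl⟩ ⟨b, hb, rfl⟩
      · rw [mul_add]
        exact add_mem hx hy
    exact key (ε g) (hmem g)
  · intro s hs
    constructor
    · rw [← mul_assoc, habsorb (ε g), mul_assoc, (hunit g s hs).1]
    · rw [← mul_assoc, habsorb s, mul_assoc, (hunit g s hs).2]
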